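/- The combined bound function f(x,y) (equal to g(x,y) = x+y−2D_A D_B(1−√(1−x/D_A))(1−√(1−y/D_B)) when x ≤ r(y) and to h(x,y) = x/d_B + y/d_A + D_A D_B otherwise) is strictly monotonically increasing in both variables on [0,D_A]×[0,D_B], with partial derivatives bounded below by 1/d_B in x and 1/d_A in y. -/

import Mathlib

set_option maxHeartbeats 1000000


noncomputable section

def Dfrac (d : ℕ) : ℝ := ((d : ℝ) - 1) / d

def gDSSA (dA dB : ℕ) (x y : ℝ) : ℝ :=
  x + y - 2 * Dfrac dA * Dfrac dB *
    (1 - Real.sqrt (1 - x / Dfrac dA)) * (1 - Real.sqrt (1 - y / Dfrac dB))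

def hISA (dA dB : ℕ) (x y : ℝ) : ℝ :=
  x / dB + y / dA + Dfrac dA * Dfrac dB

def rBd (dA dB : ℕ) (y : ℝ) : ℝ :=
  Dfrac dA * (y / Dfrac dB - 1 + 2 * Real.sqrt (1 - y / Dfrac dB))

def fBound (dA dB : ℕ) (x y : ℝ) : ℝ :=
  if x ≤ rBd dA dB y then gDSSA dA dB x y else hISA dA dB x y

lemma dcast_pos {d : ℕ} (hd : 2 ≤ d) : (0:ℝ) < d := by
  have : (2:ℝ) ≤ d := by exact_mod_cast hd
  linarith

lemma Dfrac_pos {d : ℕ} (hd : 2 ≤ d) : 0 < Dfrac d := by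
  have h := dcast_pos hd
  have h2 : (2:ℝ) ≤ d := by exact_mod_cast hd
  unfold Dfrac
  apply div_pos <;> linarith

lemma div_eq_mul_one_sub (d : ℕ) (hd : 2 ≤ d) (t : ℝ) : t / d = t * (1 - Dfrac d) := by
  have h0 : (d:ℝ) ≠ 0 := (dcast_pos hd).ne'
  rw [Dfrac]
  field_simp
  ring

lemma hISA_eq (dA dB : ℕ) (hA : 2 ≤ dA) (hB : 2 ≤ dB) (x y : ℝ) :
    hISA dA dB x y = x * (1 - Dfrac dB) + y * (1 - Dfrac dA) + Dfrac dA * Dfrac dB := by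
  rw [hISA, div_eq_mul_one_sub dB hB, div_eq_mul_one_sub dA hA]

lemma gx_incr (dA dB : ℕ) (hA : 2 ≤ dA) (hB : 2 ≤ dB) (x x' y : ℝ)
    (hx0 : 0 ≤ x) (hxx : x ≤ x') (hxr : x' ≤ rBd dA dB y)
    (hxa : x' ≤ Dfrac dA) (hy0 : 0 ≤ y) (hyb : y ≤ Dfrac dB) :
    (x' - x) / dB ≤ gDSSA dA dB x' y - gDSSA dA dB x y := by
  have ha := Dfrac_pos hA
  have hb := Dfrac_pos hB
  unfold rBd at hxr
  unfold gDSSA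
  rw [div_eq_mul_one_sub dB hB]
  set a := Dfrac dA with hadef
  set b := Dfrac dB with hbdef
  have hxa0 : x ≤ a := hxx.trans hxa
  have h1 : 0 ≤ 1 - x / a := by rw [sub_nonneg]; exact (div_le_one ha).mpr hxa0
  have h1' : 0 ≤ 1 - x' / a := by rw [sub_nonneg]; exact (div_le_one ha).mpr hxa
  have h2 : 0 ≤ 1 - y / b := by rw [sub_nonneg]; exact (div_le_one hb).mpr hyb
  set u := Real.sqrt (1 - x / a) with hudef
  set u' := Real.sqrt (1 - x' / a) with hu'def
  set s := Real.sqrt (1 - y / b) with hsdef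
  have hu2 : u ^ 2 = 1 - x / a := Real.sq_sqrt h1
  have hu'2 : u' ^ 2 = 1 - x' / a := Real.sq_sqrt h1'
  have hs2 : s ^ 2 = 1 - y / b := Real.sq_sqrt h2
  have hane : a ≠ 0 := ha.ne'
  have hbne : b ≠ 0 := hb.ne'
  have hau : a * u ^ 2 = a - x := by rw [hu2]; field_simp
  have hau' : a * u' ^ 2 = a - x' := by rw [hu'2]; field_simp
  have hbs : b * s ^ 2 = b - y := by rw [hs2]; field_simp
  have hu'0 : 0 ≤ u' := Real.sqrt_nonneg _
  have hs0 : 0 ≤ s := Real.sqrt_nonneg _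
  have huu : u' ≤ u := Real.sqrt_le_sqrt (by gcongr)
  have hyq : y / b = 1 - s ^ 2 := by linarith
  rw [hyq] at hxr
  have hcond1 : (1 - s) ^ 2 ≤ u' ^ 2 := by nlinarith [ha, hau', hxr]
  have hcond : 1 - s ≤ u' := by
    by_contra hcc
    push_neg at hcc
    nlinarith [hcond1, hu'0, hcc]
  have key : 0 ≤ a * b * (u - u') * (u + u' - 2 * (1 - s)) := by
    apply mul_nonneg (mul_nonneg (mul_nonneg ha.le hb.le) (by linarith)) (by linarith)
  have e1 : b * (a * u ^ 2) = b * (a - x) := by rw [hau]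
  have e2 : b * (a * u' ^ 2) = b * (a - x') := by rw [hau']
  nlinarith [key, e1, e2]

lemma gy_incr (dA dB : ℕ) (hA : 2 ≤ dA) (hB : 2 ≤ dB) (x y y' : ℝ)
    (hx0 : 0 ≤ x) (hxa : x ≤ Dfrac dA) (hy0 : 0 ≤ y) (hyy : y ≤ y')
    (hy'b : y' ≤ Dfrac dB) (hxr : x ≤ rBd dA dB y') :
    (y' - y) / dA ≤ gDSSA dA dB x y' - gDSSA dA dB x y := by
  have ha := Dfrac_pos hA
  have hb := Dfrac_pos hB
  unfold rBd at hxr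
  unfold gDSSA
  rw [div_eq_mul_one_sub dA hA]
  set a := Dfrac dA with hadef
  set b := Dfrac dB with hbdef
  have hyb0 : y ≤ b := hyy.trans hy'b
  have h1 : 0 ≤ 1 - y / b := by rw [sub_nonneg]; exact (div_le_one hb).mpr hyb0
  have h1' : 0 ≤ 1 - y' / b := by rw [sub_nonneg]; exact (div_le_one hb).mpr hy'b
  have h2 : 0 ≤ 1 - x / a := by rw [sub_nonneg]; exact (div_le_one ha).mpr hxa
  set s := Real.sqrt (1 - y / b) with hsdef
  set s' := Real.sqrt (1 - y' / b) with hs'def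
  set u := Real.sqrt (1 - x / a) with hudef
  have hs2 : s ^ 2 = 1 - y / b := Real.sq_sqrt h1
  have hs'2 : s' ^ 2 = 1 - y' / b := Real.sq_sqrt h1'
  have hu2 : u ^ 2 = 1 - x / a := Real.sq_sqrt h2
  have hane : a ≠ 0 := ha.ne'
  have hbne : b ≠ 0 := hb.ne'
  have hbs : b * s ^ 2 = b - y := by rw [hs2]; field_simp
  have hbs' : b * s' ^ 2 = b - y' := by rw [hs'2]; field_simp
  have hau : a * u ^ 2 = a - x := by rw [hu2]; field_simp
  have hs'0 : 0 ≤ s' := Real.sqrt_nonneg _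
  have hu0 : 0 ≤ u := Real.sqrt_nonneg _
  have hss : s' ≤ s := Real.sqrt_le_sqrt (by gcongr)
  have hyq : y' / b = 1 - s' ^ 2 := by linarith
  rw [hyq] at hxr
  have hcond1 : (1 - s') ^ 2 ≤ u ^ 2 := by nlinarith [ha, hau, hxr]
  have hcond : 1 - s' ≤ u := by
    by_contra hcc
    push_neg at hcc
    nlinarith [hcond1, hu0, hcc]
  have key : 0 ≤ a * b * (s - s') * (s + s' - 2 * (1 - u)) := by
    apply mul_nonneg (mul_nonneg (mul_nonneg ha.le hb.le) (by linarith)) (by linarith)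
  have e1 : a * (b * s ^ 2) = a * (b - y) := by rw [hbs]
  have e2 : a * (b * s' ^ 2) = a * (b - y') := by rw [hbs']
  nlinarith [key, e1, e2]

lemma rBd_le (dA dB : ℕ) (hA : 2 ≤ dA) (hB : 2 ≤ dB) (y : ℝ)
    (hy0 : 0 ≤ y) (hyb : y ≤ Dfrac dB) : rBd dA dB y ≤ Dfrac dA := by
  have ha := Dfrac_pos hA
  have hb := Dfrac_pos hB
  unfold rBd
  set a := Dfrac dA
  set b := Dfrac dB
  have h1 : 0 ≤ 1 - y / b := by rw [sub_nonneg]; exact (div_le_one hb).mpr hyb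
  set s := Real.sqrt (1 - y / b) with hsdef
  have hs2 : s ^ 2 = 1 - y / b := Real.sq_sqrt h1
  have hyq : y / b = 1 - s ^ 2 := by linarith
  rw [hyq]
  nlinarith [ha, sq_nonneg (1 - s)]

lemma rBd_anti (dA dB : ℕ) (hA : 2 ≤ dA) (hB : 2 ≤ dB) (y y' : ℝ)
    (hy0 : 0 ≤ y) (hyy : y ≤ y') (hy'b : y' ≤ Dfrac dB) :
    rBd dA dB y' ≤ rBd dA dB y := by
  have ha := Dfrac_pos hA
  have hb := Dfrac_pos hB
  unfold rBd
  set a := Dfrac dA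
  set b := Dfrac dB
  have h1 : 0 ≤ 1 - y / b := by
    rw [sub_nonneg]; exact (div_le_one hb).mpr (hyy.trans hy'b)
  have h1' : 0 ≤ 1 - y' / b := by rw [sub_nonneg]; exact (div_le_one hb).mpr hy'b
  set s := Real.sqrt (1 - y / b) with hsdef
  set s' := Real.sqrt (1 - y' / b) with hs'def
  have hs2 : s ^ 2 = 1 - y / b := Real.sq_sqrt h1
  have hs'2 : s' ^ 2 = 1 - y' / b := Real.sq_sqrt h1'
  have hs1 : s ≤ 1 := Real.sqrt_le_one.mpr (by nlinarith [div_nonneg hy0 hb.le])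
  have hss : s' ≤ s := Real.sqrt_le_sqrt (by gcongr)
  have hs'0 : 0 ≤ s' := Real.sqrt_nonneg _
  have hyq : y / b = 1 - s ^ 2 := by linarith
  have hy'q : y' / b = 1 - s' ^ 2 := by linarith
  rw [hyq, hy'q]
  nlinarith [ha, mul_nonneg (sub_nonneg.mpr hss) (by linarith : (0:ℝ) ≤ 2 - s - s')]

lemma bd_eq (dA dB : ℕ) (hA : 2 ≤ dA) (hB : 2 ≤ dB) (y : ℝ)
    (hy0 : 0 ≤ y) (hyb : y ≤ Dfrac dB) :
    gDSSA dA dB (rBd dA dB y) y = hISA dA dB (rBd dA dB y) y := by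
  have ha := Dfrac_pos hA
  have hb := Dfrac_pos hB
  rw [hISA_eq dA dB hA hB]
  unfold gDSSA rBd
  set a := Dfrac dA with hadef
  set b := Dfrac dB with hbdef
  have h1 : 0 ≤ 1 - y / b := by rw [sub_nonneg]; exact (div_le_one hb).mpr hyb
  set s := Real.sqrt (1 - y / b) with hsdef
  have hs2 : s ^ 2 = 1 - y / b := Real.sq_sqrt h1
  have hs1 : s ≤ 1 := Real.sqrt_le_one.mpr (by nlinarith [div_nonneg hy0 hb.le])
  have hane : a ≠ 0 := ha.ne'
  have hbne : b ≠ 0 := hb.ne'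
  have hbs : b * s ^ 2 = b - y := by rw [hs2]; field_simp
  have hyq : y / b = 1 - s ^ 2 := by linarith
  rw [hyq]
  have harg : (1 : ℝ) - a * (1 - s ^ 2 - 1 + 2 * s) / a = (1 - s) ^ 2 := by
    field_simp
    ring
  rw [harg, Real.sqrt_sq (by linarith)]
  linear_combination a * hbs

lemma incr_x (dA dB : ℕ) (hA : 2 ≤ dA) (hB : 2 ≤ dB) (x x' y : ℝ)
    (hx0 : 0 ≤ x) (hxx : x ≤ x') (hxa : x' ≤ Dfrac dA) (hy0 : 0 ≤ y) (hyb : y ≤ Dfrac dB) :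
    (x' - x) / dB ≤ fBound dA dB x' y - fBound dA dB x y := by
  by_cases hc' : x' ≤ rBd dA dB y
  · have hc : x ≤ rBd dA dB y := hxx.trans hc'
    rw [fBound, fBound, if_pos hc, if_pos hc']
    exact gx_incr dA dB hA hB x x' y hx0 hxx hc' hxa hy0 hyb
  · by_cases hc : x ≤ rBd dA dB y
    · rw [fBound, fBound, if_pos hc, if_neg hc']
      have hra : rBd dA dB y ≤ Dfrac dA := rBd_le dA dB hA hB y hy0 hyb
      have hg : (rBd dA dB y - x) / dB ≤ gDSSA dA dB (rBd dA dB y) y - gDSSA dA dB x y :=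
        gx_incr dA dB hA hB x (rBd dA dB y) y hx0 hc le_rfl hra hy0 hyb
      have hbd : gDSSA dA dB (rBd dA dB y) y = hISA dA dB (rBd dA dB y) y :=
        bd_eq dA dB hA hB y hy0 hyb
      have hh : hISA dA dB x' y - hISA dA dB (rBd dA dB y) y = (x' - rBd dA dB y) / dB := by
        rw [hISA_eq dA dB hA hB, hISA_eq dA dB hA hB, div_eq_mul_one_sub dB hB]
        ring
      have hsplit : (x' - x) / (dB:ℝ) = (x' - rBd dA dB y) / dB + (rBd dA dB y - x) / dB := by
        ring
      linarith
    · have hc'' : ¬ x' ≤ rBd dA dB y := fun h => hc (hxx.trans h)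
      rw [fBound, fBound, if_neg hc, if_neg hc'']
      rw [hISA_eq dA dB hA hB, hISA_eq dA dB hA hB, div_eq_mul_one_sub dB hB]
      apply le_of_eq
      ring

lemma mixed_y (dA dB : ℕ) (hA : 2 ≤ dA) (hB : 2 ≤ dB) (x y : ℝ)
    (hx0 : 0 ≤ x) (hxa : x ≤ Dfrac dA) (hy0 : 0 ≤ y) (hyb : y ≤ Dfrac dB)
    (hc : x ≤ rBd dA dB y) :
    ∃ yh, y ≤ yh ∧ yh ≤ Dfrac dB ∧ 0 ≤ yh ∧ rBd dA dB yh = x := by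
  have ha := Dfrac_pos hA
  have hb := Dfrac_pos hB
  unfold rBd at hc ⊢
  set a := Dfrac dA with hadef
  set b := Dfrac dB with hbdef
  have h2 : 0 ≤ 1 - x / a := by rw [sub_nonneg]; exact (div_le_one ha).mpr hxa
  have h1 : 0 ≤ 1 - y / b := by rw [sub_nonneg]; exact (div_le_one hb).mpr hyb
  set u := Real.sqrt (1 - x / a) with hudef
  set s := Real.sqrt (1 - y / b) with hsdef
  have hu2 : u ^ 2 = 1 - x / a := Real.sq_sqrt h2
  have hs2 : s ^ 2 = 1 - y / b := Real.sq_sqrt h1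
  have hane : a ≠ 0 := ha.ne'
  have hbne : b ≠ 0 := hb.ne'
  have hau : a * u ^ 2 = a - x := by rw [hu2]; field_simp
  have hbs : b * s ^ 2 = b - y := by rw [hs2]; field_simp
  have hu0 : 0 ≤ u := Real.sqrt_nonneg _
  have hs0 : 0 ≤ s := Real.sqrt_nonneg _
  have hu1 : u ≤ 1 := Real.sqrt_le_one.mpr (by nlinarith [div_nonneg hx0 ha.le])
  have hyq : y / b = 1 - s ^ 2 := by linarith
  rw [hyq] at hc
  have hcond1 : (1 - s) ^ 2 ≤ u ^ 2 := by nlinarith [ha, hau, hc]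
  have hcond : 1 - s ≤ u := by
    by_contra hcc
    push_neg at hcc
    nlinarith [hcond1, hu0, hcc]
  refine ⟨b * (1 - (1 - u) ^ 2), ?_, ?_, ?_, ?_⟩
  · have hsq : (1 - u) ^ 2 ≤ s ^ 2 := by nlinarith [hcond, hs0, hu1]
    nlinarith [mul_le_mul_of_nonneg_left hsq hb.le, hbs]
  · nlinarith [hb, sq_nonneg (1 - u)]
  · have h1u : (1 - u) ^ 2 ≤ 1 := by nlinarith [hu0, hu1]
    nlinarith [mul_le_mul_of_nonneg_left h1u hb.le]
  · have hq : b * (1 - (1 - u) ^ 2) / b = 1 - (1 - u) ^ 2 := by field_simp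
    rw [hq]
    have harg : (1:ℝ) - (1 - (1 - u) ^ 2) = (1 - u) ^ 2 := by ring
    rw [harg, Real.sqrt_sq (by linarith)]
    linear_combination (-1 : ℝ) * hau

lemma incr_y (dA dB : ℕ) (hA : 2 ≤ dA) (hB : 2 ≤ dB) (x y y' : ℝ)
    (hx0 : 0 ≤ x) (hxa : x ≤ Dfrac dA) (hy0 : 0 ≤ y) (hyy : y ≤ y')
    (hy'b : y' ≤ Dfrac dB) :
    (y' - y) / dA ≤ fBound dA dB x y' - fBound dA dB x y := by
  by_cases hc' : x ≤ rBd dA dB y'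
  · have hc : x ≤ rBd dA dB y := hc'.trans (rBd_anti dA dB hA hB y y' hy0 hyy hy'b)
    rw [fBound, fBound, if_pos hc, if_pos hc']
    exact gy_incr dA dB hA hB x y y' hx0 hxa hy0 hyy hy'b hc'
  · by_cases hc : x ≤ rBd dA dB y
    · rw [fBound, fBound, if_pos hc, if_neg hc']
      obtain ⟨yh, hyyh, hyhb, hyh0, hr⟩ :=
        mixed_y dA dB hA hB x y hx0 hxa hy0 (hyy.trans hy'b) hc
      have hg : (yh - y) / dA ≤ gDSSA dA dB x yh - gDSSA dA dB x y :=
        gy_incr dA dB hA hB x y yh hx0 hxa hy0 hyyh hyhb (hr ▸ le_rfl)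
      have hbd : gDSSA dA dB x yh = hISA dA dB x yh := by
        have := bd_eq dA dB hA hB yh hyh0 hyhb
        rwa [hr] at this
      have hh : hISA dA dB x y' - hISA dA dB x yh = (y' - yh) / dA := by
        rw [hISA_eq dA dB hA hB, hISA_eq dA dB hA hB, div_eq_mul_one_sub dA hA]
        ring
      have hsplit : (y' - y) / (dA:ℝ) = (y' - yh) / dA + (yh - y) / dA := by ring
      linarith
    · have hc'' : ¬ x ≤ rBd dA dB y := hc
      rw [fBound, fBound, if_neg hc, if_neg hc']
      rw [hISA_eq dA dB hA hB, hISA_eq dA dB hA hB, div_eq_mul_one_sub dA hA]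
      apply le_of_eq
      ring

/-- The combined bound `f` is strictly increasing in both variables on
`[0,D_A] × [0,D_B]`, and the increments are bounded below by the slopes `1/d_B` (in `x`)
and `1/d_A` (in `y`), expressing that the partial derivatives are bounded below by these. -/
theorem fBound_strict_mono (dA dB : ℕ) (hA : 2 ≤ dA) (hB : 2 ≤ dB) :
    (∀ x x' y : ℝ, 0 ≤ x → x < x' → x' ≤ Dfrac dA → 0 ≤ y → y ≤ Dfrac dB →
      fBound dA dB x y < fBound dA dB x' y ∧
      (x' - x) / dB ≤ fBound dA dB x' y - fBound dA dB x y) ∧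
    (∀ x y y' : ℝ, 0 ≤ x → x ≤ Dfrac dA → 0 ≤ y → y < y' → y' ≤ Dfrac dB →
      fBound dA dB x y < fBound dA dB x y' ∧
      (y' - y) / dA ≤ fBound dA dB x y' - fBound dA dB x y) := by
  constructor
  · intro x x' y hx0 hxx hxa hy0 hyb
    have hstep := incr_x dA dB hA hB x x' y hx0 hxx.le hxa hy0 hyb
    have hpos : 0 < (x' - x) / (dB:ℝ) := div_pos (by linarith) (dcast_pos hB)
    exact ⟨by linarith, hstep⟩
  · intro x y y' hx0 hxa hy0 hyy hy'b
    have hstep := incr_y dA dB hA hB x y y' hx0 hxa hy0 hyy.le hy'b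
    have hpos : 0 < (y' - y) / (dA:ℝ) := div_pos (by linarith) (dcast_pos hA)
    exact ⟨by linarith, hstep⟩

end
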